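/- For x, y ∈ ℝ^n, the inequality xᵀN x ≤ yᵀN y holds for all positive semidefinite matrices N ∈ S₊^n if, and only if, there exists α ∈ ℝ with −1 ≤ α ≤ 1 such that x = α y. -/

import Mathlib

open Matrix

lemma dotProduct_self_nonneg' {n : ℕ} (v : Fin n → ℝ) : 0 ≤ v ⬝ᵥ v :=
  Finset.sum_nonneg fun i _ => mul_self_nonneg (v i)

lemma quadForm_vecMulVec {n : ℕ} (v z : Fin n → ℝ) :
    z ⬝ᵥ (vecMulVec v v *ᵥ z) = (v ⬝ᵥ z) * (v ⬝ᵥ z) := by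
  have h : vecMulVec v v *ᵥ z = (v ⬝ᵥ z) • v := by
    ext i
    simp [vecMulVec, mulVec, dotProduct, Finset.mul_sum, mul_comm, mul_assoc, mul_left_comm]
  rw [h, dotProduct_smul, smul_eq_mul, dotProduct_comm]

lemma posSemidef_vecMulVec_self {n : ℕ} (v : Fin n → ℝ) :
    (vecMulVec v v).PosSemidef := by
  refine Matrix.PosSemidef.of_dotProduct_mulVec_nonneg ?_ ?_
  · ext i j
    simp [vecMulVec, conjTranspose, mul_comm]
  · intro z
    simp only [star_trivial]
    rw [quadForm_vecMulVec]
    exact mul_self_nonneg _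

/-- `xᵀNx ≤ yᵀNy` holds for all positive semidefinite matrices `N` iff
`x = α • y` for some `α ∈ [-1, 1]`. -/
theorem quadForm_le_iff_collinear (n : ℕ) (x y : Fin n → ℝ) :
    (∀ N : Matrix (Fin n) (Fin n) ℝ, N.PosSemidef →
      x ⬝ᵥ (N *ᵥ x) ≤ y ⬝ᵥ (N *ᵥ y)) ↔
    ∃ α : ℝ, -1 ≤ α ∧ α ≤ 1 ∧ x = α • y := by
  constructor
  · intro h
    have h1 := h 1 Matrix.PosSemidef.one
    simp only [one_mulVec] at h1
    by_cases hy : y = 0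
    · refine ⟨0, by norm_num, by norm_num, ?_⟩
      subst hy
      simp only [dotProduct_zero] at h1
      have : x ⬝ᵥ x = 0 := le_antisymm h1 (dotProduct_self_nonneg' x)
      rw [dotProduct_self_eq_zero] at this
      simp [this]
    · have hyy : 0 < y ⬝ᵥ y := by
        rcases lt_or_eq_of_le (dotProduct_self_nonneg' y) with h' | h'
        · exact h'
        · exact absurd (dotProduct_self_eq_zero.mp h'.symm) hy
      set c : ℝ := (x ⬝ᵥ y) / (y ⬝ᵥ y) with hc
      set v : Fin n → ℝ := x - c • y with hv
      have hvy : v ⬝ᵥ y = 0 := by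
        rw [hv, sub_dotProduct, smul_dotProduct, hc, smul_eq_mul]
        field_simp
        ring
      have hvx : v ⬝ᵥ x = 0 := by
        have := h (vecMulVec v v) (posSemidef_vecMulVec_self v)
        rw [quadForm_vecMulVec, quadForm_vecMulVec, hvy] at this
        nlinarith [mul_self_nonneg (v ⬝ᵥ x)]
      have hvv : v ⬝ᵥ v = 0 := by
        have h2 : v ⬝ᵥ (c • y) = c * (v ⬝ᵥ y) := by rw [dotProduct_smul, smul_eq_mul]
        calc v ⬝ᵥ v = v ⬝ᵥ x - v ⬝ᵥ (c • y) := by rw [hv, dotProduct_sub]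
        _ = 0 := by rw [hvx, h2, hvy]; ring
      have hveq : v = 0 := dotProduct_self_eq_zero.mp hvv
      have hxc : x = c • y := by
        have := hv ▸ hveq
        exact sub_eq_zero.mp this
      have hxx : x ⬝ᵥ x = c * c * (y ⬝ᵥ y) := by
        rw [hxc, smul_dotProduct, dotProduct_smul, smul_eq_mul, smul_eq_mul]; ring
      have hc2 : c * c ≤ 1 := by
        rw [hxx] at h1; nlinarith
      have habs : |c| ≤ 1 := by
        rw [abs_le]
        constructor <;> nlinarith [abs_nonneg c]
      exact ⟨c, (abs_le.mp habs).1, (abs_le.mp habs).2, hxc⟩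
  · rintro ⟨α, hα1, hα2, rfl⟩
    intro N hN
    rw [smul_dotProduct, mulVec_smul, dotProduct_smul, smul_eq_mul, smul_eq_mul, ← mul_assoc]
    have hy : 0 ≤ y ⬝ᵥ (N *ᵥ y) := by simpa using hN.dotProduct_mulVec_nonneg y
    have hα : α * α ≤ 1 := by nlinarith
    nlinarith [mul_nonneg (sub_nonneg.mpr hα) hy]
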